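/- Let H be a complex Hilbert space, let P, S ∈ Σ⁺(H), and let t ≥ 0. Then the operators I + tPS and I + tP^{1/2}SP^{1/2} are boundedly invertible and the identity (I + tPS)⁻¹ = I − t P^{1/2} (I + t P^{1/2} S P^{1/2})⁻¹ P^{1/2} S holds in ℒ(H). -/

import Mathlib

open ContinuousLinearMap RCLike
open scoped InnerProductSpace NNReal

private lemma aux_smul_pos {H : Type*} [NormedAddCommGroup H] [InnerProductSpace ℂ H]
    [CompleteSpace H] {A : H →L[ℂ] H} (hA : A.IsPositive) {t : ℝ} (ht : 0 ≤ t) :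
    (t • A).IsPositive := by
  refine ⟨?_, fun x => ?_⟩
  · exact ContinuousLinearMap.isSelfAdjoint_iff_isSymmetric.mp
      ((IsSelfAdjoint.all t).smul hA.isSelfAdjoint)
  have : (t • A).reApplyInnerSelf x = t * A.reApplyInnerSelf x := by
    simp only [ContinuousLinearMap.reApplyInnerSelf, ContinuousLinearMap.smul_apply]
    rw [RCLike.real_smul_eq_coe_smul (K := ℂ), inner_smul_left, RCLike.conj_ofReal,
      RCLike.re_ofReal_mul]
  rw [this]
  exact mul_nonneg ht (hA.2 x)

private lemma aux_isUnit_one_add {H : Type*} [NormedAddCommGroup H] [InnerProductSpace ℂ H]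
    [CompleteSpace H] {A : H →L[ℂ] H} (hA : A.IsPositive) : IsUnit (1 + A) := by
  apply isUnit_of_forall_le_norm_inner_map (1 + A) (c := 1) one_pos
  intro x
  rw [NNReal.coe_one, mul_one]
  calc ‖x‖ ^ 2 = re (⟪x, x⟫_ℂ) := by
        simp [inner_self_eq_norm_sq]
        norm_cast
    _ ≤ re (⟪(1 + A) x, x⟫_ℂ) := by
        simp only [ContinuousLinearMap.add_apply, ContinuousLinearMap.one_apply, inner_add_left,
          map_add, le_add_iff_nonneg_right]
        exact hA.re_inner_nonneg_left x
    _ ≤ ‖(⟪(1 + A) x, x⟫_ℂ)‖ := RCLike.re_le_norm _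

private lemma aux_swap {A : Type*} [Ring A] (u v : A) (h : IsUnit (1 + v * u)) :
    IsUnit (1 + u * v) ∧
      Ring.inverse (1 + u * v) = 1 - u * Ring.inverse (1 + v * u) * v := by
  set c := Ring.inverse (1 + v * u) with hc
  have hc1 : (1 + v * u) * c = 1 := Ring.mul_inverse_cancel _ h
  have hc2 : c * (1 + v * u) = 1 := Ring.inverse_mul_cancel _ h
  have h1 : (1 + u * v) * (1 - u * c * v) = 1 := by
    have e : (1 + u * v) * (1 - u * c * v) = 1 + u * v - u * ((1 + v * u) * c) * v := by
      noncomm_ring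
    rw [e, hc1]; noncomm_ring
  have h2 : (1 - u * c * v) * (1 + u * v) = 1 := by
    have e : (1 - u * c * v) * (1 + u * v) = 1 + u * v - u * (c * (1 + v * u)) * v := by
      noncomm_ring
    rw [e, hc2]; noncomm_ring
  have hu : IsUnit (1 + u * v) := ⟨⟨_, _, h1, h2⟩, rfl⟩
  refine ⟨hu, ?_⟩
  have hmul : Ring.inverse (1 + u * v) * (1 + u * v) = 1 := Ring.inverse_mul_cancel _ hu
  calc Ring.inverse (1 + u * v)
      = Ring.inverse (1 + u * v) * ((1 + u * v) * (1 - u * c * v)) := by rw [h1, mul_one]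
    _ = (Ring.inverse (1 + u * v) * (1 + u * v)) * (1 - u * c * v) := by rw [← mul_assoc]
    _ = 1 - u * c * v := by rw [hmul, one_mul]

/-- For positive operators `P, S` on a complex Hilbert space, `t ≥ 0`, and `R` the
(unique) positive square root of `P` (i.e. `R` positive with `R·R = P`), the operators
`I + tPS` and `I + tRSR` are boundedly invertible, and
`(I + tPS)⁻¹ = I − t R (I + t R S R)⁻¹ R S` in `ℒ(H)`. -/
theorem stmt_9 {H : Type*} [NormedAddCommGroup H] [InnerProductSpace ℂ H] [CompleteSpace H]
    (P S R : H →L[ℂ] H) (hP : P.IsPositive) (hS : S.IsPositive)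
    (hR : R.IsPositive) (hR2 : R * R = P) (t : ℝ) (ht : 0 ≤ t) :
    IsUnit (1 + t • (P * S)) ∧ IsUnit (1 + t • (R * S * R)) ∧
      Ring.inverse (1 + t • (P * S))
        = 1 - t • (R * Ring.inverse (1 + t • (R * S * R)) * (R * S)) := by
  have hRSR : (R * S * R).IsPositive := by
    have h := hS.conj_adjoint R
    rw [hR.isSelfAdjoint.adjoint_eq] at h
    have : R ∘L S ∘L R = R * S * R := by rw [mul_assoc]; rfl
    rwa [this] at h
  have hUnit2 : IsUnit (1 + t • (R * S * R)) :=
    aux_isUnit_one_add (aux_smul_pos hRSR ht)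
  have hvu : (t • (R * S)) * R = t • (R * S * R) := by rw [smul_mul_assoc]
  have huv : R * (t • (R * S)) = t • (P * S) := by
    rw [mul_smul_comm, ← mul_assoc, hR2]
  have key := aux_swap R (t • (R * S)) (by rw [hvu]; exact hUnit2)
  rw [huv, hvu] at key
  refine ⟨key.1, hUnit2, ?_⟩
  rw [key.2, mul_smul_comm]
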